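/- arXiv:2003.01671 — 2 statements merged into one kernel-verified Lean document; each statement's English description precedes it below -/
import Mathlib

section
/- (Well-posedness of the implicit Euler step.) Let (X, d) be a complete metric space and φ : X → (−∞, +∞] a proper lower semicontinuous function. Assume: (a) there exist h_* > 0 and x_* ∈ X with inf_{y ∈ X} [φ(y) + d(x_*, y)²/(2h_*)] > −∞; (b) every sequence (x_m) in X with sup_m φ(x_m) < +∞ and sup_{m,k} d(x_m, x_k) < +∞ admits a convergent subsequence. Then for every x ∈ X with φ(x) < +∞ and every h with 0 < h < h_*, the function y ↦ φ(y) + d(x, y)²/(2h) attains its infimum on X, i.e. it has at least one minimizer. -/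
open Filter

/-- Well-posedness of the implicit Euler step: under boundedness-below of one penalized
functional and a compactness assumption, each penalized functional with time step
`0 < h < h_*` attains its infimum. -/
theorem implicit_euler_step_minimizer_exists
    {X : Type*} [MetricSpace X] [CompleteSpace X]
    (φ : X → EReal) (hproper : ∃ x, φ x ≠ ⊤) (hbot : ∀ x, φ x ≠ ⊥)
    (hlsc : LowerSemicontinuous φ)
    (hstar : ℝ) (xstar : X) (hhstar : 0 < hstar)
    (hbdd : ∃ m : ℝ, ∀ y : X, (m : EReal) ≤ φ y + ((dist xstar y ^ 2 / (2 * hstar) : ℝ) : EReal))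
    (hcpt : ∀ x : ℕ → X, (∃ C : ℝ, ∀ m, φ (x m) ≤ (C : EReal)) →
      (∃ R : ℝ, ∀ m k, dist (x m) (x k) ≤ R) →
      ∃ ψ : ℕ → ℕ, StrictMono ψ ∧ ∃ z : X, Tendsto (x ∘ ψ) atTop (nhds z)) :
    ∀ x : X, φ x ≠ ⊤ → ∀ h : ℝ, 0 < h → h < hstar →
      ∃ y : X, ∀ z : X,
        φ y + ((dist x y ^ 2 / (2 * h) : ℝ) : EReal) ≤
          φ z + ((dist x z ^ 2 / (2 * h) : ℝ) : EReal) := by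
  obtain ⟨m, hm⟩ := hbdd
  intro x hx h hh hhs
  set F : X → EReal := fun z => φ z + ((dist x z ^ 2 / (2 * h) : ℝ) : EReal) with hF
  set a : ℝ := dist xstar x with ha
  have ha0 : (0:ℝ) ≤ a := dist_nonneg
  set δ : ℝ := (hstar - h) / (4 * h * hstar) with hδdef
  have hδ : 0 < δ := by
    apply div_pos (by linarith) (by positivity)
  set C0 : ℝ := (1 + 2 * h / (hstar - h)) * a ^ 2 / (2 * hstar) with hC0
  -- key real inequality
  have hkey_real : ∀ d : ℝ, 0 ≤ d →
      (a + d) ^ 2 / (2 * hstar) ≤ d ^ 2 / (2 * h) + C0 - δ * d ^ 2 := by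
    intro d hd
    have h1 : (0:ℝ) < hstar - h := by linarith
    have h2 := sq_nonneg (2 * a * h - (hstar - h) * d)
    rw [hC0, hδdef, div_le_iff₀ (by positivity : (0:ℝ) < 2 * hstar)]
    field_simp
    nlinarith [mul_nonneg (show (0:ℝ) ≤ 8 * h * hstar ^ 2 by positivity) h2]
  -- key EReal lower bound
  have hkey : ∀ z : X, ((m - C0 + δ * dist x z ^ 2 : ℝ) : EReal) ≤ F z := by
    intro z
    set d : ℝ := dist x z with hd
    have hd0 : (0:ℝ) ≤ d := dist_nonneg
    have htri : dist xstar z ≤ a + d := dist_triangle xstar x z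
    have h2 : dist xstar z ^ 2 / (2 * hstar) ≤ d ^ 2 / (2 * h) + (C0 - δ * d ^ 2) := by
      have hsq : dist xstar z ^ 2 ≤ (a + d) ^ 2 := by
        apply pow_le_pow_left₀ dist_nonneg htri
      have := hkey_real d hd0
      have hdiv : dist xstar z ^ 2 / (2 * hstar) ≤ (a + d) ^ 2 / (2 * hstar) := by
        apply div_le_div_of_nonneg_right hsq (by positivity) |>.trans_eq rfl
      linarith
    have h3 : (m : EReal) ≤ F z + ((C0 - δ * d ^ 2 : ℝ) : EReal) := by
      refine (hm z).trans ?_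
      have : F z + ((C0 - δ * d ^ 2 : ℝ) : EReal)
          = φ z + ((d ^ 2 / (2 * h) + (C0 - δ * d ^ 2) : ℝ) : EReal) := by
        rw [EReal.coe_add, hF, ← add_assoc]
      rw [this]
      exact add_le_add le_rfl (EReal.coe_le_coe_iff.2 h2)
    calc ((m - C0 + δ * d ^ 2 : ℝ) : EReal)
        = ((m : ℝ) : EReal) - ((C0 - δ * d ^ 2 : ℝ) : EReal) := by
          rw [← EReal.coe_sub]; norm_cast; ring
      _ ≤ (F z + ((C0 - δ * d ^ 2 : ℝ) : EReal)) - ((C0 - δ * d ^ 2 : ℝ) : EReal) :=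
          EReal.sub_le_sub h3 le_rfl
      _ = F z := EReal.add_sub_cancel_right
  -- the infimum
  set S : EReal := ⨅ z, F z with hSdef
  have hSleFx : S ≤ F x := iInf_le _ x
  have hFxtop : F x ≠ ⊤ := by
    exact (EReal.add_lt_top hx (EReal.coe_ne_top (dist x x ^ 2 / (2 * h)))).ne
  have hStop : S ≠ ⊤ := (hSleFx.trans_lt (lt_top_iff_ne_top.2 hFxtop)).ne
  have hSbot : S ≠ ⊥ := by
    intro hb
    have : ((m - C0 : ℝ) : EReal) ≤ S := by
      apply le_iInf
      intro z
      refine le_trans ?_ (hkey z)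
      exact EReal.coe_le_coe_iff.2 (by nlinarith [sq_nonneg (dist x z)])
    rw [hb] at this
    exact (EReal.coe_ne_bot _) (le_bot_iff.1 this)
  set s : ℝ := S.toReal with hs
  have hScoe : ((s : ℝ) : EReal) = S := EReal.coe_toReal hStop hSbot
  -- minimizing sequence
  have hmin : ∀ n : ℕ, ∃ z : X, F z < S + ((1 / (n + 1) : ℝ) : EReal) := by
    intro n
    have hpos : (0:ℝ) < 1 / (n + 1) := by positivity
    have hlt : S < S + ((1 / (n + 1) : ℝ) : EReal) := by
      rw [← hScoe, ← EReal.coe_add]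
      exact EReal.coe_lt_coe_iff.2 (by linarith)
    rw [hSdef] at hlt
    exact iInf_lt_iff.1 hlt
  choose u hu using hmin
  have huS : ∀ n : ℕ, F (u n) ≤ ((s + 1 / (n + 1) : ℝ) : EReal) := by
    intro n
    refine (hu n).le.trans ?_
    rw [← hScoe, ← EReal.coe_add]
  -- bounds on the sequence
  have hφbd : ∀ n : ℕ, φ (u n) ≤ ((s + 1 : ℝ) : EReal) := by
    intro n
    have h1 : φ (u n) ≤ F (u n) := by
      rw [hF]
      exact le_add_of_nonneg_right (by exact_mod_cast div_nonneg (sq_nonneg _) (by positivity))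
    refine h1.trans ((huS n).trans ?_)
    refine EReal.coe_le_coe_iff.2 ?_
    have : (1:ℝ) / (n + 1) ≤ 1 := by
      rw [div_le_one (by positivity)]; linarith [Nat.cast_nonneg (α := ℝ) n]
    linarith
  have hdbd : ∀ n : ℕ, dist x (u n) ≤ Real.sqrt ((s + 1 - (m - C0)) / δ) := by
    intro n
    have h1 : ((m - C0 + δ * dist x (u n) ^ 2 : ℝ) : EReal) ≤ ((s + 1 : ℝ) : EReal) := by
      refine (hkey (u n)).trans ((huS n).trans (EReal.coe_le_coe_iff.2 ?_))
      have : (1:ℝ) / (n + 1) ≤ 1 := by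
        rw [div_le_one (by positivity)]; linarith [Nat.cast_nonneg (α := ℝ) n]
      linarith
    rw [EReal.coe_le_coe_iff] at h1
    apply Real.le_sqrt_of_sq_le
    rw [le_div_iff₀ hδ]
    nlinarith
  set R0 : ℝ := Real.sqrt ((s + 1 - (m - C0)) / δ) with hR0
  have hRbd : ∀ n k : ℕ, dist (u n) (u k) ≤ 2 * R0 := by
    intro n k
    calc dist (u n) (u k) ≤ dist (u n) x + dist x (u k) := dist_triangle _ _ _
      _ ≤ R0 + R0 := by
          rw [dist_comm (u n) x]; exact add_le_add (hdbd n) (hdbd k)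
      _ = 2 * R0 := by ring
  -- compactness
  obtain ⟨ψ, hψ, y, hy⟩ := hcpt u ⟨s + 1, hφbd⟩ ⟨2 * R0, hRbd⟩
  -- F is lower semicontinuous
  have hg : Continuous fun z : X => ((dist x z ^ 2 / (2 * h) : ℝ) : EReal) := by
    apply continuous_coe_real_ereal.comp
    exact ((continuous_const.dist continuous_id).pow 2).div_const _
  have hFlsc : LowerSemicontinuous F := by
    apply hlsc.add' hg.lowerSemicontinuous
    intro w
    apply EReal.continuousAt_add
    · exact Or.inr (EReal.coe_ne_bot _)
    · exact Or.inl (hbot w)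
  -- the limit point is a minimizer
  have hFyS : F y ≤ S := by
    by_contra hcon
    push_neg at hcon
    obtain ⟨r, hr1, hr2⟩ := EReal.exists_between_coe_real hcon
    obtain ⟨N, hN⟩ := exists_nat_one_div_lt (ε := r - s) (by
      rw [← hScoe, EReal.coe_lt_coe_iff] at hr1; linarith)
    -- eventually F (u (ψ k)) > r near the limit, by lsc
    have hev : ∀ᶠ k in atTop, (r : EReal) < F (u (ψ k)) := by
      have := hFlsc y (r : EReal) hr2
      exact hy.eventually this
    -- but F (u (ψ k)) < r for k ≥ N
    have hlt : ∀ k : ℕ, N ≤ k → F (u (ψ k)) < (r : EReal) := by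
      intro k hk
      have hψk : N ≤ ψ k := hk.trans (hψ.le_apply)
      refine (huS (ψ k)).trans_lt (EReal.coe_lt_coe_iff.2 ?_)
      have h1 : (1:ℝ) / (ψ k + 1) ≤ 1 / (N + 1) := by
        apply one_div_le_one_div_of_le (by positivity)
        have : (N : ℝ) ≤ (ψ k : ℝ) := Nat.cast_le.2 hψk
        linarith
      linarith
    rw [eventually_atTop] at hev
    obtain ⟨M, hM⟩ := hev
    exact absurd (hlt (max N M) (le_max_left _ _)) (not_lt.2 (hM (max N M) (le_max_right _ _)).le)
  refine ⟨y, fun z => ?_⟩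
  exact (hFyS.trans (iInf_le _ z) : F y ≤ F z)
end

section
/- (Existence of generalized minimizing movements in complete metric spaces.) Let (X, d) be a complete metric space and φ : X → (−∞, +∞] a proper lower semicontinuous function. Assume: (a) there exist h_* > 0 and x_* ∈ X with inf_{y ∈ X} [φ(y) + d(x_*, y)²/(2h_*)] > −∞; (b) every sequence (x_m) in X with sup_m φ(x_m) < +∞ and sup_{m,k} d(x_m, x_k) < +∞ admits a convergent subsequence. Then for every u₀ ∈ X with φ(u₀) < +∞ there exist a sequence h_m → 0 of positive reals, for each m a sequence w_m : ℕ → X with w_m(0) = u₀ such that for every k ∈ ℕ, w_m(k+1) minimizes y ↦ φ(y) + d(w_m(k), y)²/(2h_m) over y ∈ X, and a continuous curve u : [0,∞) → X with u(0) = u₀, such that for every t ≥ 0 one has d(w_m(⌊t/h_m⌋), u(t)) → 0 as m → ∞. In particular, the set of generalized minimizing movements starting at u₀ is nonempty. -/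
open Filter

namespace GMMAux

lemma sqrt_add_le {x y : ℝ} (hx : 0 ≤ x) (hy : 0 ≤ y) :
    Real.sqrt (x + y) ≤ Real.sqrt x + Real.sqrt y := by
  have h : x + y ≤ (Real.sqrt x + Real.sqrt y) ^ 2 := by
    nlinarith [Real.sq_sqrt hx, Real.sq_sqrt hy, Real.sqrt_nonneg x, Real.sqrt_nonneg y]
  calc Real.sqrt (x + y) ≤ Real.sqrt ((Real.sqrt x + Real.sqrt y) ^ 2) := Real.sqrt_le_sqrt h
    _ = _ := Real.sqrt_sq (by positivity)

lemma coe_le_add_coe_iff {a : EReal} {c r : ℝ} :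
    (r : EReal) ≤ a + (c : EReal) ↔ ((r - c : ℝ) : EReal) ≤ a := by
  induction a using EReal.rec with
  | bot => simp [← EReal.coe_sub]
  | coe x =>
    rw [← EReal.coe_add, EReal.coe_le_coe_iff, EReal.coe_le_coe_iff]
    constructor <;> intro h <;> linarith
  | top => simp

lemma add_coe_le_coe_iff {a : EReal} {c r : ℝ} :
    a + (c : EReal) ≤ (r : EReal) ↔ a ≤ ((r - c : ℝ) : EReal) := by
  induction a using EReal.rec with
  | bot => simp
  | coe x =>
    rw [← EReal.coe_add, EReal.coe_le_coe_iff, EReal.coe_le_coe_iff]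
    constructor <;> intro h <;> linarith
  | top => simp [EReal.top_add_coe, ← EReal.coe_sub]

variable {X : Type*} [MetricSpace X]

lemma exists_min (φ : X → EReal) (hproper : ∃ x, φ x ≠ ⊤) (hbot : ∀ x, φ x ≠ ⊥)
    (hlsc : LowerSemicontinuous φ) (hstar : ℝ) (xstar : X) (hs : 0 < hstar)
    (m0 : ℝ) (hm0 : ∀ y, (m0 : EReal) ≤ φ y + ((dist xstar y ^ 2 / (2 * hstar) : ℝ) : EReal))
    (hcpt : ∀ x : ℕ → X, (∃ C : ℝ, ∀ m, φ (x m) ≤ (C : EReal)) →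
      (∃ R : ℝ, ∀ m k, dist (x m) (x k) ≤ R) →
      ∃ ψ : ℕ → ℕ, StrictMono ψ ∧ ∃ z : X, Tendsto (x ∘ ψ) atTop (nhds z))
    (x : X) (h : ℝ) (hh : 0 < h) (hh4 : h ≤ hstar / 4) :
    ∃ z, ∀ y, φ z + ((dist x z ^ 2 / (2 * h) : ℝ) : EReal) ≤
      φ y + ((dist x y ^ 2 / (2 * h) : ℝ) : EReal) := by
  set G : X → EReal := fun y => φ y + ((dist x y ^ 2 / (2 * h) : ℝ) : EReal) with hG
  -- uniform lower bound for G
  have hA : ∀ y : X, ((m0 - dist xstar x ^ 2 / hstar : ℝ) : EReal) ≤ G y := by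
    intro y
    have h1 := hm0 y
    rw [coe_le_add_coe_iff] at h1
    rw [hG]
    rw [coe_le_add_coe_iff]
    refine le_trans (EReal.coe_le_coe_iff.mpr ?_) h1
    have htri : dist xstar y ≤ dist xstar x + dist x y := dist_triangle _ _ _
    have h2 : dist xstar y ^ 2 ≤ 2 * dist xstar x ^ 2 + 2 * dist x y ^ 2 := by
      have := pow_le_pow_left₀ dist_nonneg htri 2
      nlinarith [sq_nonneg (dist xstar x - dist x y)]
    have h3 : dist x y ^ 2 / hstar ≤ dist x y ^ 2 / (2 * h) := by
      apply div_le_div_of_nonneg_left (by positivity) (by positivity) (by linarith)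
    have h4 : dist xstar y ^ 2 / (2 * hstar) ≤ (2 * dist xstar x ^ 2 + 2 * dist x y ^ 2) / (2 * hstar) := by
      gcongr
    have h5 : (2 * dist xstar x ^ 2 + 2 * dist x y ^ 2) / (2 * hstar)
        = dist xstar x ^ 2 / hstar + dist x y ^ 2 / hstar := by ring
    linarith
  obtain ⟨x0, hx0⟩ := hproper
  have hGx0top : G x0 ≠ ⊤ := by
    rw [hG]
    exact (EReal.add_lt_top hx0 (EReal.coe_ne_top _)).ne
  set I : EReal := ⨅ y, G y with hIdef
  have hItop : I ≠ ⊤ := ne_top_of_le_ne_top hGx0top (iInf_le _ x0)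
  have hIbot : I ≠ ⊥ := by
    intro hc
    have h1 : ((m0 - dist xstar x ^ 2 / hstar : ℝ) : EReal) ≤ I := le_iInf hA
    rw [hc, le_bot_iff] at h1
    exact EReal.coe_ne_bot _ h1
  set r : ℝ := I.toReal with hrdef
  have hIr : I = (r : EReal) := (EReal.coe_toReal hItop hIbot).symm
  have hseq : ∀ n : ℕ, ∃ y, G y < ((r + 1 / (n + 1) : ℝ) : EReal) := by
    intro n
    apply iInf_lt_iff.mp
    rw [← hIdef, hIr]
    exact EReal.coe_lt_coe_iff.mpr (lt_add_of_pos_right r (by positivity))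
  choose y hy using hseq
  have hφy_top : ∀ n, φ (y n) ≠ ⊤ := by
    intro n hc
    have h1 := hy n
    rw [hG] at h1
    simp only [hc, EReal.top_add_coe] at h1
    exact not_top_lt h1
  set p : ℕ → ℝ := fun n => (φ (y n)).toReal with hpdef
  have hp : ∀ n, φ (y n) = ((p n : ℝ) : EReal) := fun n =>
    (EReal.coe_toReal (hφy_top n) (hbot _)).symm
  have hup : ∀ n, p n + dist x (y n) ^ 2 / (2 * h) ≤ r + 1 / (n + 1) := by
    intro n
    have h1 := (hy n).le
    simp only [hG] at h1
    rw [hp n, ← EReal.coe_add, EReal.coe_le_coe_iff] at h1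
    exact h1
  have hlow : ∀ n, m0 - dist xstar (y n) ^ 2 / (2 * hstar) ≤ p n := by
    intro n
    have h1 := hm0 (y n)
    rw [hp n, ← EReal.coe_add, EReal.coe_le_coe_iff] at h1
    linarith
  have hone : ∀ n : ℕ, (1 : ℝ) / (n + 1) ≤ 1 := by
    intro n
    rw [div_le_one (by positivity)]
    linarith [Nat.cast_nonneg (α := ℝ) n]
  set B : ℝ := (r + 1 - m0 + dist xstar x ^ 2 / hstar) * hstar with hBdef
  have hdb : ∀ n, dist x (y n) ≤ Real.sqrt B := by
    intro n
    have h1 := hup n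
    have h2 := hlow n
    have htri : dist xstar (y n) ≤ dist xstar x + dist x (y n) := dist_triangle _ _ _
    have key : dist x (y n) ^ 2 ≤ B := by
      set D := dist x (y n) with hD
      set A := dist xstar x with hA2
      have hDpos : 0 ≤ D := dist_nonneg
      have hApos : 0 ≤ A := dist_nonneg
      have i1 : D ^ 2 / (hstar / 2) ≤ D ^ 2 / (2 * h) := by
        apply div_le_div_of_nonneg_left (by positivity) (by positivity) (by linarith)
      have i2 : dist xstar (y n) ^ 2 / (2 * hstar) ≤ (2 * A ^ 2 + 2 * D ^ 2) / (2 * hstar) := by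
        gcongr
        have := pow_le_pow_left₀ dist_nonneg htri 2
        nlinarith [sq_nonneg (A - D)]
      have i3 : (2 * A ^ 2 + 2 * D ^ 2) / (2 * hstar) = A ^ 2 / hstar + D ^ 2 / hstar := by
        ring
      have i4 : D ^ 2 / (hstar / 2) = 2 * (D ^ 2 / hstar) := by ring
      have i5 : (1 : ℝ) / (n + 1) ≤ 1 := hone n
      -- p n + D^2/(2h) ≤ r + 1 ; p n ≥ m0 - A²/hstar - D²/hstar; D²/(2h) ≥ 2 D²/hstar
      have i6 : m0 - A ^ 2 / hstar - D ^ 2 / hstar + 2 * (D ^ 2 / hstar) ≤ r + 1 := by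
        linarith
      have i7 : D ^ 2 / hstar ≤ r + 1 - m0 + A ^ 2 / hstar := by linarith
      calc D ^ 2 = D ^ 2 / hstar * hstar := by field_simp
        _ ≤ (r + 1 - m0 + A ^ 2 / hstar) * hstar := by
            apply mul_le_mul_of_nonneg_right i7 hs.le
        _ = B := rfl
    calc dist x (y n) = Real.sqrt (dist x (y n) ^ 2) := (Real.sqrt_sq dist_nonneg).symm
      _ ≤ Real.sqrt B := Real.sqrt_le_sqrt key
  have hcb : ∃ C : ℝ, ∀ n, φ (y n) ≤ (C : EReal) := by
    refine ⟨r + 1, fun n => ?_⟩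
    rw [hp n]
    apply EReal.coe_le_coe_iff.mpr
    have := hup n
    have := hone n
    nlinarith [sq_nonneg (dist x (y n)), mul_pos (two_pos (α := ℝ)) hh,
      div_nonneg (sq_nonneg (dist x (y n))) (by positivity : (0:ℝ) ≤ 2 * h)]
  have hdist : ∃ R : ℝ, ∀ n k, dist (y n) (y k) ≤ R := by
    refine ⟨2 * Real.sqrt B, fun n k => ?_⟩
    calc dist (y n) (y k) ≤ dist (y n) x + dist x (y k) := dist_triangle _ _ _
      _ ≤ Real.sqrt B + Real.sqrt B := by
          rw [dist_comm (y n) x]; exact add_le_add (hdb n) (hdb k)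
      _ = 2 * Real.sqrt B := by ring
  obtain ⟨ψ, hψ, z, hz⟩ := hcpt y hcb hdist
  refine ⟨z, fun v => ?_⟩
  have hIlev : I ≤ G v := iInf_le _ v
  refine le_trans (le_trans ?_ hIlev) le_rfl
  -- show G z ≤ I
  apply le_of_forall_gt_imp_ge_of_dense
  intro c hc
  have hc'ex : ∃ c' : EReal, I < c' ∧ c' < c := exists_between hc
  obtain ⟨c', hc1', hc2'⟩ := hc'ex
  have hc'top : c' ≠ ⊤ := (lt_of_lt_of_le hc2' le_top).ne
  have hc'bot : c' ≠ ⊥ := by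
    intro hcc; rw [hcc] at hc1'; exact absurd hc1' (not_lt.mpr bot_le)
  set c'' : ℝ := c'.toReal with hc''def
  have hcc : c' = (c'' : EReal) := (EReal.coe_toReal hc'top hc'bot).symm
  have hrc : r < c'' := by
    rw [hIr, hcc, EReal.coe_lt_coe_iff] at hc1'; exact hc1'
  suffices hGz : G z ≤ (c'' : EReal) by
    rw [← hcc] at hGz; exact hGz.trans hc2'.le
  by_contra hcon
  push_neg at hcon
  set e : ℝ := c'' - dist x z ^ 2 / (2 * h) with hedef
  have he : (e : EReal) < φ z := by
    by_contra h'
    push_neg at h'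
    have hle : G z ≤ (c'' : EReal) := by
      rw [hG]
      calc φ z + ((dist x z ^ 2 / (2 * h) : ℝ) : EReal)
          ≤ (e : EReal) + ((dist x z ^ 2 / (2 * h) : ℝ) : EReal) := add_le_add h' le_rfl
        _ = ((e + dist x z ^ 2 / (2 * h) : ℝ) : EReal) := (EReal.coe_add _ _).symm
        _ = (c'' : EReal) := by rw [hedef]; norm_num
    exact absurd hle (not_le.mpr hcon)
  set δ : ℝ := (c'' - r) / 2 with hδdef
  have hδ : 0 < δ := by rw [hδdef]; linarith
  have hev1 : ∀ᶠ n in atTop, (e : EReal) < φ ((y ∘ ψ) n) := hz.eventually (hlsc z (e : EReal) he)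
  have hcontd : Tendsto (fun n => dist x ((y ∘ ψ) n) ^ 2 / (2 * h)) atTop
      (nhds (dist x z ^ 2 / (2 * h))) := by
    have h1 : Tendsto (fun n => dist x ((y ∘ ψ) n)) atTop (nhds (dist x z)) :=
      Tendsto.dist tendsto_const_nhds hz
    exact (h1.pow 2).div_const (2 * h)
  have hev2 : ∀ᶠ n in atTop, dist x z ^ 2 / (2 * h) - δ < dist x ((y ∘ ψ) n) ^ 2 / (2 * h) :=
    hcontd.eventually (eventually_gt_nhds (by linarith))
  have hev3 : ∀ᶠ n in atTop, (1 : ℝ) / (ψ n + 1) < δ := by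
    have h1 : Tendsto (fun n : ℕ => (1 : ℝ) / (n + 1)) atTop (nhds 0) :=
      tendsto_one_div_add_atTop_nhds_zero_nat
    have h2 : Tendsto (fun n : ℕ => (1 : ℝ) / (ψ n + 1)) atTop (nhds 0) :=
      h1.comp hψ.tendsto_atTop
    exact h2.eventually (eventually_lt_nhds hδ)
  obtain ⟨n, h1, h2, h3⟩ := (hev1.and (hev2.and hev3)).exists
  have hlb : ((c'' - δ : ℝ) : EReal) ≤ G ((y ∘ ψ) n) := by
    rw [hG]
    calc ((c'' - δ : ℝ) : EReal)
        = ((e + (dist x z ^ 2 / (2 * h) - δ) : ℝ) : EReal) := by rw [hedef]; norm_num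
      _ = (e : EReal) + ((dist x z ^ 2 / (2 * h) - δ : ℝ) : EReal) := EReal.coe_add _ _
      _ ≤ φ ((y ∘ ψ) n) + ((dist x ((y ∘ ψ) n) ^ 2 / (2 * h) : ℝ) : EReal) :=
          add_le_add h1.le (EReal.coe_le_coe_iff.mpr h2.le)
  have hub := (hy (ψ n)).le
  simp only [Function.comp_apply] at hlb
  have hfin : ((c'' - δ : ℝ) : EReal) ≤ ((r + 1 / (ψ n + 1) : ℝ) : EReal) := hlb.trans hub
  rw [EReal.coe_le_coe_iff] at hfin
  rw [hδdef] at hfin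
  linarith


lemma dist_le_sum_aux {X : Type*} [MetricSpace X] (x : ℕ → X) :
    ∀ k l, k ≤ l → dist (x k) (x l) ≤ ∑ j ∈ Finset.Ico k l, dist (x j) (x (j + 1)) := by
  intro k l hkl
  induction l, hkl using Nat.le_induction with
  | base => simp
  | succ l hkl ih =>
    rw [Finset.sum_Ico_succ_top hkl]
    calc dist (x k) (x (l + 1)) ≤ dist (x k) (x l) + dist (x l) (x (l + 1)) :=
          dist_triangle _ _ _
      _ ≤ _ := by linarith

section Discrete
variable {h hstar m0 S : ℝ} {p a d : ℕ → ℝ}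

lemma sum_sq_le (hh : 0 < h)
    (hstep : ∀ k, p (k + 1) + d k ^ 2 / (2 * h) ≤ p k) :
    ∀ k l, k ≤ l → (∑ j ∈ Finset.Ico k l, d j ^ 2) ≤ 2 * h * (p k - p l) := by
  intro k l hkl
  induction l, hkl using Nat.le_induction with
  | base => simp
  | succ l hkl ih =>
    rw [Finset.sum_Ico_succ_top hkl]
    have h1 := hstep l
    have h2 : d l ^ 2 ≤ (p l - p (l + 1)) * (2 * h) := by
      rw [← div_le_iff₀ (by positivity)]
      linarith
    nlinarith

lemma p_mono (hh : 0 < h)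
    (hstep : ∀ k, p (k + 1) + d k ^ 2 / (2 * h) ≤ p k) :
    ∀ k l, k ≤ l → p l ≤ p k := by
  intro k l hkl
  have h1 := sum_sq_le hh hstep k l hkl
  have h2 : (0 : ℝ) ≤ ∑ j ∈ Finset.Ico k l, d j ^ 2 :=
    Finset.sum_nonneg fun j _ => sq_nonneg _
  nlinarith

lemma a_le_sum (htri : ∀ k, a (k + 1) ≤ a k + d k) :
    ∀ k l, k ≤ l → a l ≤ a k + ∑ j ∈ Finset.Ico k l, d j := by
  intro k l hkl
  induction l, hkl using Nat.le_induction with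
  | base => simp
  | succ l hkl ih =>
    rw [Finset.sum_Ico_succ_top hkl]
    calc a (l + 1) ≤ a l + d l := htri l
      _ ≤ a k + (∑ j ∈ Finset.Ico k l, d j) + d l := by linarith
      _ = _ := by ring

lemma sum_le_sqrt (hd : ∀ k, 0 ≤ d k) (k l : ℕ) :
    (∑ j ∈ Finset.Ico k l, d j) ≤
      Real.sqrt ((l - k : ℕ) : ℝ) * Real.sqrt (∑ j ∈ Finset.Ico k l, d j ^ 2) := by
  have h1 : (∑ j ∈ Finset.Ico k l, d j) ^ 2 ≤
      ((l - k : ℕ) : ℝ) * ∑ j ∈ Finset.Ico k l, d j ^ 2 := by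
    have := sq_sum_le_card_mul_sum_sq (s := Finset.Ico k l) (f := d)
    simpa [Nat.card_Ico] using this
  have h2 : (0 : ℝ) ≤ ∑ j ∈ Finset.Ico k l, d j := Finset.sum_nonneg fun j _ => hd j
  calc (∑ j ∈ Finset.Ico k l, d j) = Real.sqrt ((∑ j ∈ Finset.Ico k l, d j) ^ 2) :=
        (Real.sqrt_sq h2).symm
    _ ≤ Real.sqrt (((l - k : ℕ) : ℝ) * ∑ j ∈ Finset.Ico k l, d j ^ 2) := Real.sqrt_le_sqrt h1
    _ = _ := Real.sqrt_mul (by positivity) _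

lemma block_bound (hh : 0 < h) (hs : 0 < hstar) (hh4 : h ≤ hstar / 4)
    (hd : ∀ k, 0 ≤ d k) (ha : ∀ k, 0 ≤ a k)
    (hstep : ∀ k, p (k + 1) + d k ^ 2 / (2 * h) ≤ p k)
    (hlow : ∀ k, m0 - a k ^ 2 / (2 * hstar) ≤ p k)
    (htri : ∀ k, a (k + 1) ≤ a k + d k)
    (hp0 : p 0 ≤ S) :
    ∀ k l, k ≤ l → ((l - k : ℕ) : ℝ) * h ≤ hstar / 2 →
      a l ≤ 4 * a k + 4 * Real.sqrt (hstar * max (S - m0) 0) := by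
  intro k l hkl hblock
  set M := max (S - m0) 0 with hM
  have hM0 : 0 ≤ M := le_max_right _ _
  have hMS : S - m0 ≤ M := le_max_left _ _
  set n : ℝ := ((l - k : ℕ) : ℝ) with hn
  have hn0 : 0 ≤ n := by positivity
  -- sum of squares bound
  have h1 : (∑ j ∈ Finset.Ico k l, d j ^ 2) ≤ 2 * h * M + h * a l ^ 2 / hstar := by
    have h2 := sum_sq_le hh hstep k l hkl
    have h3 : p k ≤ S := le_trans (p_mono hh hstep 0 k (Nat.zero_le _)) hp0
    have h4 := hlow l
    have h5 : 2 * h * (a l ^ 2 / (2 * hstar)) = h * a l ^ 2 / hstar := by ring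
    nlinarith [sq_nonneg (a l), hh.le]
  have h2 : a l ≤ a k + Real.sqrt n * Real.sqrt (∑ j ∈ Finset.Ico k l, d j ^ 2) := by
    have h3 := a_le_sum htri k l hkl
    have h4 := sum_le_sqrt hd k l
    rw [← hn] at h4
    linarith
  -- bound the sqrt term
  have h3 : Real.sqrt (∑ j ∈ Finset.Ico k l, d j ^ 2) ≤
      Real.sqrt (2 * h * M) + Real.sqrt (h * a l ^ 2 / hstar) := by
    calc Real.sqrt (∑ j ∈ Finset.Ico k l, d j ^ 2)
        ≤ Real.sqrt (2 * h * M + h * a l ^ 2 / hstar) := Real.sqrt_le_sqrt h1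
      _ ≤ _ := sqrt_add_le (by positivity) (by positivity)
  have h4 : Real.sqrt n * Real.sqrt (2 * h * M) ≤ Real.sqrt (hstar * M) := by
    rw [← Real.sqrt_mul hn0]
    apply Real.sqrt_le_sqrt
    have : n * (2 * h * M) = (n * h) * (2 * M) := by ring
    rw [this]
    calc (n * h) * (2 * M) ≤ (hstar / 2) * (2 * M) := by
          apply mul_le_mul_of_nonneg_right hblock (by positivity)
      _ = hstar * M := by ring
  have h5 : Real.sqrt n * Real.sqrt (h * a l ^ 2 / hstar) ≤ (3 / 4) * a l := by
    have e1 : h * a l ^ 2 / hstar = (h / hstar) * a l ^ 2 := by ring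
    rw [e1, ← Real.sqrt_mul hn0]
    have e2 : n * ((h / hstar) * a l ^ 2) = (n * h / hstar) * a l ^ 2 := by ring
    rw [e2]
    have e3 : (n * h / hstar) * a l ^ 2 ≤ ((3/4) * a l) ^ 2 := by
      have : n * h / hstar ≤ 1 / 2 := by
        rw [div_le_div_iff₀ hs (by norm_num)]
        linarith
      have h6 : (n * h / hstar) * a l ^ 2 ≤ (1/2) * a l ^ 2 :=
        mul_le_mul_of_nonneg_right this (sq_nonneg _)
      nlinarith [sq_nonneg (a l)]
    calc Real.sqrt ((n * h / hstar) * a l ^ 2) ≤ Real.sqrt (((3/4) * a l) ^ 2) :=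
          Real.sqrt_le_sqrt e3
      _ = (3/4) * a l := Real.sqrt_sq (mul_nonneg (by norm_num) (ha l))
  have hfin : a l ≤ a k + Real.sqrt (hstar * M) + (3/4) * a l := by
    have h6 : Real.sqrt n * Real.sqrt (∑ j ∈ Finset.Ico k l, d j ^ 2) ≤
        Real.sqrt n * (Real.sqrt (2 * h * M) + Real.sqrt (h * a l ^ 2 / hstar)) :=
      mul_le_mul_of_nonneg_left h3 (Real.sqrt_nonneg _)
    have h7 : Real.sqrt n * (Real.sqrt (2 * h * M) + Real.sqrt (h * a l ^ 2 / hstar))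
        = Real.sqrt n * Real.sqrt (2 * h * M) + Real.sqrt n * Real.sqrt (h * a l ^ 2 / hstar) := by
      ring
    linarith
  linarith

lemma global_bound (hh : 0 < h) (hs : 0 < hstar) (hh4 : h ≤ hstar / 4)
    (hd : ∀ k, 0 ≤ d k) (ha : ∀ k, 0 ≤ a k)
    (hstep : ∀ k, p (k + 1) + d k ^ 2 / (2 * h) ≤ p k)
    (hlow : ∀ k, m0 - a k ^ 2 / (2 * hstar) ≤ p k)
    (htri : ∀ k, a (k + 1) ≤ a k + d k)
    (hp0 : p 0 ≤ S) :
    ∀ (n k : ℕ), (k : ℝ) * h ≤ n * (hstar / 4) →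
      a k ≤ 5 ^ n * (a 0 + 4 * Real.sqrt (hstar * max (S - m0) 0) + 1) := by
  set C1 := Real.sqrt (hstar * max (S - m0) 0) with hC1
  have hC10 : 0 ≤ C1 := Real.sqrt_nonneg _
  set B := a 0 + 4 * C1 + 1 with hB
  have hB1 : 4 * C1 + 1 ≤ B := by rw [hB]; linarith [ha 0]
  have hB0 : 0 < B := by rw [hB]; linarith [ha 0]
  intro n
  induction n with
  | zero =>
    intro k hk
    have hk0 : k = 0 := by
      by_contra hne
      have h1 : (1 : ℝ) ≤ (k : ℝ) := by
        exact_mod_cast Nat.one_le_iff_ne_zero.mpr hne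
      nlinarith
    rw [hk0, pow_zero, one_mul, hB]
    linarith
  | succ n ih =>
    intro k hk
    have h5n : (1 : ℝ) ≤ 5 ^ n := one_le_pow₀ (by norm_num)
    by_cases hc : (k : ℝ) * h ≤ n * (hstar / 4)
    · calc a k ≤ 5 ^ n * B := ih k hc
        _ ≤ 5 ^ (n + 1) * B := by
            apply mul_le_mul_of_nonneg_right _ hB0.le
            apply pow_le_pow_right₀ (by norm_num) (Nat.le_succ n)
    · push_neg at hc
      set k0 : ℕ := Nat.floor ((n : ℝ) * (hstar / 4) / h) with hk0def
      have hk0a : (k0 : ℝ) ≤ (n : ℝ) * (hstar / 4) / h := Nat.floor_le (by positivity)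
      have hk0h : (k0 : ℝ) * h ≤ (n : ℝ) * (hstar / 4) := by
        rw [← le_div_iff₀ hh] at *
        exact hk0a
      have hk0k : k0 ≤ k := by
        have : (k0 : ℝ) < (k : ℝ) := by
          by_contra hcc
          push_neg at hcc
          have := mul_le_mul_of_nonneg_right hcc hh.le
          nlinarith
        exact_mod_cast this.le
      have hfl : (n : ℝ) * (hstar / 4) / h < (k0 : ℝ) + 1 := Nat.lt_floor_add_one _
      have hfl2 : (n : ℝ) * (hstar / 4) < ((k0 : ℝ) + 1) * h := by
        rw [div_lt_iff₀ hh] at hfl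
        linarith
      have hcast : ((k - k0 : ℕ) : ℝ) = (k : ℝ) - (k0 : ℝ) := by
        rw [Nat.cast_sub hk0k]
      have hblock : ((k - k0 : ℕ) : ℝ) * h ≤ hstar / 2 := by
        rw [hcast]
        have e1 : ((k : ℝ) - (k0 : ℝ)) * h = (k : ℝ) * h - (k0 : ℝ) * h := by ring
        rw [e1]
        have e2 : ((k0 : ℝ) + 1) * h = (k0 : ℝ) * h + h := by ring
        rw [e2] at hfl2
        push_cast at hk
        have e3 : ((n : ℝ) + 1) * (hstar / 4) = (n : ℝ) * (hstar / 4) + hstar / 4 := by ring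
        rw [e3] at hk
        linarith
      have hblk := block_bound hh hs hh4 hd ha hstep hlow htri hp0 k0 k hk0k hblock
      have hih := ih k0 hk0h
      rw [← hC1] at hblk
      calc a k ≤ 4 * a k0 + 4 * C1 := hblk
        _ ≤ 4 * (5 ^ n * B) + 4 * C1 := by linarith
        _ ≤ 5 ^ (n + 1) * B := by
            rw [pow_succ]
            nlinarith

lemma holder_bound (hh : 0 < h) (hs : 0 < hstar) (hh4 : h ≤ hstar / 4)
    (hd : ∀ k, 0 ≤ d k) (ha : ∀ k, 0 ≤ a k)
    (hstep : ∀ k, p (k + 1) + d k ^ 2 / (2 * h) ≤ p k)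
    (hlow : ∀ k, m0 - a k ^ 2 / (2 * hstar) ≤ p k)
    (htri : ∀ k, a (k + 1) ≤ a k + d k)
    (hp0 : p 0 ≤ S) (T : ℝ) (hT : 0 ≤ T) :
    ∀ k l : ℕ, k ≤ l → (l : ℝ) * h ≤ T →
      (∑ j ∈ Finset.Ico k l, d j) ≤
        Real.sqrt (2 * max (S - m0) 0 +
          (5 ^ (Nat.ceil (4 * T / hstar)) * (a 0 + 4 * Real.sqrt (hstar * max (S - m0) 0) + 1)) ^ 2
            / hstar) * Real.sqrt (((l - k : ℕ) : ℝ) * h) := by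
  intro k l hkl hlT
  set M := max (S - m0) 0 with hM
  have hM0 : 0 ≤ M := le_max_right _ _
  have hMS : S - m0 ≤ M := le_max_left _ _
  set Rb := 5 ^ (Nat.ceil (4 * T / hstar)) * (a 0 + 4 * Real.sqrt (hstar * M) + 1) with hRb
  -- a l ≤ Rb
  have hal : a l ≤ Rb := by
    apply global_bound hh hs hh4 hd ha hstep hlow htri hp0 (Nat.ceil (4 * T / hstar)) l
    have h1 : 4 * T / hstar ≤ (Nat.ceil (4 * T / hstar) : ℝ) := Nat.le_ceil _
    have h2 : T ≤ (Nat.ceil (4 * T / hstar) : ℝ) * (hstar / 4) := by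
      rw [div_le_iff₀ hs] at h1
      nlinarith
    linarith
  have hal0 : 0 ≤ Rb := le_trans (ha l) hal
  -- sum of squares
  have h1 : (∑ j ∈ Finset.Ico k l, d j ^ 2) ≤ h * (2 * M + Rb ^ 2 / hstar) := by
    have h2 := sum_sq_le hh hstep k l hkl
    have h3 : p k ≤ S := le_trans (p_mono hh hstep 0 k (Nat.zero_le _)) hp0
    have h4 := hlow l
    have h5 : a l ^ 2 ≤ Rb ^ 2 := by nlinarith [ha l]
    have h6 : a l ^ 2 / (2 * hstar) ≤ Rb ^ 2 / (2 * hstar) := by gcongr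
    have h7 : p k - p l ≤ M + Rb ^ 2 / (2 * hstar) := by linarith
    calc (∑ j ∈ Finset.Ico k l, d j ^ 2) ≤ 2 * h * (p k - p l) := h2
      _ ≤ 2 * h * (M + Rb ^ 2 / (2 * hstar)) :=
          mul_le_mul_of_nonneg_left h7 (by positivity)
      _ = h * (2 * M + Rb ^ 2 / hstar) := by ring
  have h2 := sum_le_sqrt hd k l
  calc (∑ j ∈ Finset.Ico k l, d j)
      ≤ Real.sqrt ((l - k : ℕ) : ℝ) * Real.sqrt (∑ j ∈ Finset.Ico k l, d j ^ 2) := h2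
    _ ≤ Real.sqrt ((l - k : ℕ) : ℝ) * Real.sqrt (h * (2 * M + Rb ^ 2 / hstar)) := by
        apply mul_le_mul_of_nonneg_left (Real.sqrt_le_sqrt h1) (Real.sqrt_nonneg _)
    _ = Real.sqrt (2 * M + Rb ^ 2 / hstar) * Real.sqrt (((l - k : ℕ) : ℝ) * h) := by
        rw [← Real.sqrt_mul (by positivity), ← Real.sqrt_mul (by positivity)]
        ring_nf

end Discrete

end GMMAux
set_option maxHeartbeats 1000000 in
open GMMAux in
/-- Existence of generalized minimizing movements in complete metric spaces: under
lower semicontinuity, boundedness-below of a penalized functional and a compactness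
assumption, the implicit Euler scheme admits a subsequence converging pointwise to a
continuous curve starting at `u₀`. -/
theorem gmm_exists_metric
    {X : Type*} [MetricSpace X] [CompleteSpace X]
    (φ : X → EReal) (hproper : ∃ x, φ x ≠ ⊤) (hbot : ∀ x, φ x ≠ ⊥)
    (hlsc : LowerSemicontinuous φ)
    (hbdd : ∃ (hstar : ℝ) (xstar : X), 0 < hstar ∧ ∃ m : ℝ, ∀ y : X,
      (m : EReal) ≤ φ y + ((dist xstar y ^ 2 / (2 * hstar) : ℝ) : EReal))
    (hcpt : ∀ x : ℕ → X, (∃ C : ℝ, ∀ m, φ (x m) ≤ (C : EReal)) →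
      (∃ R : ℝ, ∀ m k, dist (x m) (x k) ≤ R) →
      ∃ ψ : ℕ → ℕ, StrictMono ψ ∧ ∃ z : X, Tendsto (x ∘ ψ) atTop (nhds z))
    (u₀ : X) (hu₀ : φ u₀ ≠ ⊤) :
    ∃ (h : ℕ → ℝ) (w : ℕ → ℕ → X) (u : ℝ → X),
      (∀ m, 0 < h m) ∧ Tendsto h atTop (nhds 0) ∧
      (∀ m, w m 0 = u₀) ∧
      (∀ m k, ∀ y : X,
        φ (w m (k + 1)) + ((dist (w m k) (w m (k + 1)) ^ 2 / (2 * h m) : ℝ) : EReal) ≤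
          φ y + ((dist (w m k) y ^ 2 / (2 * h m) : ℝ) : EReal)) ∧
      ContinuousOn u (Set.Ici 0) ∧ u 0 = u₀ ∧
      (∀ t : ℝ, 0 ≤ t →
        Tendsto (fun m => dist (w m ⌊t / h m⌋₊) (u t)) atTop (nhds 0)) := by
  obtain ⟨hstar, xstar, hs, m0, hm0⟩ := hbdd
  -- step sizes
  set H : ℕ → ℝ := fun m => hstar / (m + 4) with hHdef
  have hHpos : ∀ m, 0 < H m := fun m => by positivity
  have hH4 : ∀ m, H m ≤ hstar / 4 := by
    intro m
    rw [hHdef]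
    apply div_le_div_of_nonneg_left hs.le (by norm_num)
    have : (0:ℝ) ≤ (m:ℝ) := Nat.cast_nonneg m
    linarith
  have hHtend : Tendsto H atTop (nhds 0) := by
    have h1 : Tendsto (fun m : ℕ => ((m : ℝ) + 4)) atTop atTop :=
      tendsto_atTop_add_const_right _ 4 tendsto_natCast_atTop_atTop
    have h2 : Tendsto (fun m : ℕ => ((m : ℝ) + 4)⁻¹) atTop (nhds 0) := h1.inv_tendsto_atTop
    have h3 : Tendsto (fun m : ℕ => hstar * ((m : ℝ) + 4)⁻¹) atTop (nhds (hstar * 0)) :=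
      h2.const_mul hstar
    rw [mul_zero] at h3
    have he : H = fun m : ℕ => hstar * ((m : ℝ) + 4)⁻¹ := by
      funext m; simp only [hHdef]; rw [div_eq_mul_inv]
    rw [he]
    exact h3
  -- the minimization scheme
  have hmin : ∀ (m : ℕ) (x : X), ∃ z, ∀ y,
      φ z + ((dist x z ^ 2 / (2 * H m) : ℝ) : EReal) ≤
        φ y + ((dist x y ^ 2 / (2 * H m) : ℝ) : EReal) :=
    fun m x => exists_min φ hproper hbot hlsc hstar xstar hs m0 hm0 hcpt x (H m)
      (hHpos m) (hH4 m)
  choose F hF using hmin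
  set w : ℕ → ℕ → X := fun m k => Nat.rec (motive := fun _ => X) u₀ (fun _ prev => F m prev) k
    with hwdef
  have hw0 : ∀ m, w m 0 = u₀ := fun m => rfl
  have hwmin : ∀ m k y, φ (w m (k + 1)) +
      ((dist (w m k) (w m (k + 1)) ^ 2 / (2 * H m) : ℝ) : EReal) ≤
      φ y + ((dist (w m k) y ^ 2 / (2 * H m) : ℝ) : EReal) :=
    fun m k y => hF m (w m k) y
  -- one-step energy inequality in EReal
  have hstepE : ∀ m k, φ (w m (k + 1)) +
      ((dist (w m k) (w m (k + 1)) ^ 2 / (2 * H m) : ℝ) : EReal) ≤ φ (w m k) := by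
    intro m k
    have h1 := hwmin m k (w m k)
    have h0 : (dist (w m k) (w m k) ^ 2 / (2 * H m) : ℝ) = 0 := by
      rw [dist_self]; ring
    rw [h0, EReal.coe_zero, add_zero] at h1
    exact h1
  -- φ stays finite along the scheme
  have hwtop : ∀ m k, φ (w m k) ≠ ⊤ := by
    intro m k
    induction k with
    | zero => exact hu₀
    | succ k ih =>
      intro hc
      have h1 := hstepE m k
      rw [hc, EReal.top_add_coe] at h1
      exact ih (top_le_iff.mp h1)
  -- real-valued energies
  set p : ℕ → ℕ → ℝ := fun m k => (φ (w m k)).toReal with hpdef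
  have hpcoe : ∀ m k, φ (w m k) = ((p m k : ℝ) : EReal) := fun m k =>
    (EReal.coe_toReal (hwtop m k) (hbot _)).symm
  set S : ℝ := (φ u₀).toReal with hSdef
  have hpS : ∀ m, p m 0 = S := fun m => rfl
  have hstepR : ∀ m k, p m (k + 1) + dist (w m k) (w m (k + 1)) ^ 2 / (2 * H m) ≤ p m k := by
    intro m k
    have h1 := hstepE m k
    rw [hpcoe m (k + 1), hpcoe m k, ← EReal.coe_add, EReal.coe_le_coe_iff] at h1
    exact h1
  have hlowR : ∀ m k, m0 - dist xstar (w m k) ^ 2 / (2 * hstar) ≤ p m k := by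
    intro m k
    have h1 := hm0 (w m k)
    rw [hpcoe m k, ← EReal.coe_add, EReal.coe_le_coe_iff] at h1
    linarith
  have htriR : ∀ m k, dist xstar (w m (k + 1)) ≤ dist xstar (w m k) +
      dist (w m k) (w m (k + 1)) := fun m k => dist_triangle _ _ _
  -- constants
  set A0 : ℝ := dist xstar u₀ with hA0def
  set M : ℝ := max (S - m0) 0 with hMdef
  have hM0 : 0 ≤ M := le_max_right _ _
  set C1 : ℝ := Real.sqrt (hstar * M) with hC1def
  have hC10 : 0 ≤ C1 := Real.sqrt_nonneg _
  set B : ℝ := A0 + 4 * C1 + 1 with hBdef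
  have hB0 : 0 < B := by rw [hBdef]; have := dist_nonneg (x := xstar) (y := u₀); linarith
  set Rb : ℝ → ℝ := fun T => 5 ^ (Nat.ceil (4 * T / hstar)) * B with hRbdef
  have hRb0 : ∀ T, 0 < Rb T := by
    intro T
    rw [hRbdef]
    positivity
  set Q : ℝ → ℝ := fun T => Real.sqrt (2 * M + (Rb T) ^ 2 / hstar) with hQdef
  have hQ0 : ∀ T, 0 ≤ Q T := fun T => Real.sqrt_nonneg _
  have hRbmono : ∀ T T', T ≤ T' → Rb T ≤ Rb T' := by
    intro T T' hTT
    rw [hRbdef]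
    apply mul_le_mul_of_nonneg_right _ hB0.le
    apply pow_le_pow_right₀ (by norm_num)
    apply Nat.ceil_le_ceil
    gcongr
  have hQmono : ∀ T T', 0 ≤ T → T ≤ T' → Q T ≤ Q T' := by
    intro T T' hT hTT
    rw [hQdef]
    apply Real.sqrt_le_sqrt
    have h1 : Rb T ≤ Rb T' := hRbmono T T' hTT
    have h2 : (Rb T) ^ 2 ≤ (Rb T') ^ 2 := by nlinarith [hRb0 T]
    have h3 : (Rb T) ^ 2 / hstar ≤ (Rb T') ^ 2 / hstar := by gcongr
    linarith
  -- uniform space bound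
  have E1 : ∀ (m k : ℕ) (T : ℝ), (k : ℝ) * H m ≤ T → dist xstar (w m k) ≤ Rb T := by
    intro m k T hkT
    have hglob := global_bound (h := H m) (hstar := hstar) (m0 := m0) (S := S)
      (p := p m) (a := fun k => dist xstar (w m k))
      (d := fun k => dist (w m k) (w m (k + 1)))
      (hHpos m) hs (hH4 m) (fun k => dist_nonneg) (fun k => dist_nonneg)
      (hstepR m) (hlowR m) (htriR m) (le_of_eq (hpS m))
      (Nat.ceil (4 * T / hstar)) k ?_
    · exact hglob
    · have h1 : 4 * T / hstar ≤ (Nat.ceil (4 * T / hstar) : ℝ) := Nat.le_ceil _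
      have h2 : T ≤ (Nat.ceil (4 * T / hstar) : ℝ) * (hstar / 4) := by
        rw [div_le_iff₀ hs] at h1
        nlinarith
      linarith
  -- uniform Hölder bound for the discrete scheme
  have E2 : ∀ (m : ℕ) (T : ℝ), 0 ≤ T → ∀ k l : ℕ, k ≤ l → (l : ℝ) * H m ≤ T →
      dist (w m k) (w m l) ≤ Q T * Real.sqrt (((l - k : ℕ) : ℝ) * H m) := by
    intro m T hT k l hkl hlT
    have hsum := holder_bound (h := H m) (hstar := hstar) (m0 := m0) (S := S)
      (p := p m) (a := fun k => dist xstar (w m k))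
      (d := fun k => dist (w m k) (w m (k + 1)))
      (hHpos m) hs (hH4 m) (fun k => dist_nonneg) (fun k => dist_nonneg)
      (hstepR m) (hlowR m) (htriR m) (le_of_eq (hpS m)) T hT k l hkl hlT
    have hdist := dist_le_sum_aux (fun k => w m k) k l hkl
    calc dist (w m k) (w m l) ≤ ∑ j ∈ Finset.Ico k l, dist (w m j) (w m (j + 1)) := hdist
      _ ≤ Q T * Real.sqrt (((l - k : ℕ) : ℝ) * H m) := hsum
  -- discrete-to-continuous time interpolation
  set W : ℕ → ℝ → X := fun m t => w m (Nat.floor (t / H m)) with hWdef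
  have E3 : ∀ (m : ℕ) (T s t : ℝ), 0 ≤ s → s ≤ t → t ≤ T →
      dist (W m s) (W m t) ≤ Q T * Real.sqrt (t - s + H m) := by
    intro m T s t hs0 hst htT
    have hT : 0 ≤ T := le_trans (le_trans hs0 hst) htT
    set k := Nat.floor (s / H m) with hk
    set l := Nat.floor (t / H m) with hl
    have hkl : k ≤ l := Nat.floor_mono (by gcongr)
    have hlH : (l : ℝ) * H m ≤ t := by
      have h1 : (l : ℝ) ≤ t / H m := Nat.floor_le (div_nonneg (le_trans hs0 hst) (hHpos m).le)
      rw [← le_div_iff₀ (hHpos m)]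
      exact h1
    have h2 := E2 m T hT k l hkl (le_trans hlH htT)
    have hks : s - H m < (k : ℝ) * H m := by
      have h3 : s / H m < (k : ℝ) + 1 := Nat.lt_floor_add_one _
      have h4 : s < ((k : ℝ) + 1) * H m := by
        rw [← div_lt_iff₀ (hHpos m)]
        exact h3
      nlinarith
    have hcast : ((l - k : ℕ) : ℝ) = (l : ℝ) - (k : ℝ) := by rw [Nat.cast_sub hkl]
    have h5 : ((l - k : ℕ) : ℝ) * H m ≤ t - s + H m := by
      rw [hcast]
      nlinarith [hHpos m]
    calc dist (W m s) (W m t) ≤ Q T * Real.sqrt (((l - k : ℕ) : ℝ) * H m) := h2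
      _ ≤ Q T * Real.sqrt (t - s + H m) :=
          mul_le_mul_of_nonneg_left (Real.sqrt_le_sqrt h5) (hQ0 T)
  have E3b : ∀ (m : ℕ) (T t : ℝ), 0 ≤ t → t ≤ T → dist xstar (W m t) ≤ Rb T := by
    intro m T t ht htT
    apply E1 m _ T
    have h1 : (Nat.floor (t / H m) : ℝ) * H m ≤ t := by
      have h2 : (Nat.floor (t / H m) : ℝ) ≤ t / H m := Nat.floor_le (div_nonneg ht (hHpos m).le)
      rw [← le_div_iff₀ (hHpos m)]
      exact h2
    linarith
  have E3c : ∀ (m : ℕ) (t : ℝ), φ (W m t) ≤ (S : EReal) := by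
    intro m t
    show φ (w m (Nat.floor (t / H m))) ≤ (S : EReal)
    rw [hpcoe m (Nat.floor (t / H m))]
    apply EReal.coe_le_coe_iff.mpr
    have h1 := p_mono (hHpos m) (hstepR m) 0 (Nat.floor (t / H m)) (Nat.zero_le _)
    exact le_trans h1 (le_of_eq (hpS m))
  -- compact sublevel sets
  set K : ℝ → Set X := fun T => φ ⁻¹' (Set.Iic (S : EReal)) ∩ Metric.closedBall xstar (Rb T)
    with hKdef
  have hKclosed : ∀ T, IsClosed (K T) := fun T =>
    (lowerSemicontinuous_iff_isClosed_preimage.mp hlsc _).inter Metric.isClosed_closedBall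
  have hKseq : ∀ T, IsSeqCompact (K T) := by
    intro T x hx
    have hφb : ∃ C : ℝ, ∀ n, φ (x n) ≤ (C : EReal) := ⟨S, fun n => (hx n).1⟩
    have hdb : ∃ R : ℝ, ∀ n j, dist (x n) (x j) ≤ R := by
      refine ⟨2 * Rb T, fun n j => ?_⟩
      have h1 : dist (x n) xstar ≤ Rb T := (hx n).2
      have h2 : dist (x j) xstar ≤ Rb T := (hx j).2
      calc dist (x n) (x j) ≤ dist (x n) xstar + dist xstar (x j) := dist_triangle _ _ _
        _ ≤ Rb T + Rb T := by rw [dist_comm xstar (x j)]; exact add_le_add h1 h2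
        _ = 2 * Rb T := by ring
    obtain ⟨ψ0, hψ0, z, hz⟩ := hcpt x hφb hdb
    exact ⟨z, (hKclosed T).mem_of_tendsto hz (Filter.Eventually.of_forall fun n => hx (ψ0 n)),
      ψ0, hψ0, hz⟩
  have hKcpt : ∀ T, IsCompact (K T) := fun T => (hKseq T).isCompact
  -- extraction of a pointwise-converging subsequence on rational times
  set τ : ℚ → ℝ := fun q => max (q : ℝ) 0 with hτdef
  have hτ0 : ∀ q, 0 ≤ τ q := fun q => le_max_right _ _
  set Gs : ℕ → (ℚ → X) := fun m q => W m (τ q) with hGsdef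
  have hGsmem : ∀ m, Gs m ∈ Set.univ.pi (fun q => K (τ q)) := by
    intro m
    rw [Set.mem_univ_pi]
    intro q
    constructor
    · exact E3c m (τ q)
    · rw [Metric.mem_closedBall, dist_comm]
      exact E3b m (τ q) (τ q) (hτ0 q) le_rfl
  have hPicpt : IsCompact (Set.univ.pi (fun q : ℚ => K (τ q))) :=
    isCompact_univ_pi fun q => hKcpt (τ q)
  obtain ⟨g, hgmem, ψ, hψ, hgtend⟩ := hPicpt.tendsto_subseq hGsmem
  have hgq : ∀ q : ℚ, Tendsto (fun n => W (ψ n) (τ q)) atTop (nhds (g q)) := by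
    intro q
    exact tendsto_pi_nhds.mp hgtend q
  have hHψ : Tendsto (fun n => H (ψ n)) atTop (nhds 0) := hHtend.comp hψ.tendsto_atTop
  -- Hölder continuity of the limit on rational times
  have hgH : ∀ (q q' : ℚ) (T : ℝ), τ q ≤ τ q' → τ q' ≤ T →
      dist (g q) (g q') ≤ Q T * Real.sqrt (τ q' - τ q) := by
    intro q q' T hqq hqT
    have hdtend : Tendsto (fun n => dist (W (ψ n) (τ q)) (W (ψ n) (τ q'))) atTop
        (nhds (dist (g q) (g q'))) := (hgq q).dist (hgq q')
    have hbtend : Tendsto (fun n => Q T * Real.sqrt (τ q' - τ q + H (ψ n))) atTop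
        (nhds (Q T * Real.sqrt (τ q' - τ q + 0))) := by
      apply Tendsto.const_mul
      exact (Real.continuous_sqrt.tendsto _).comp (tendsto_const_nhds.add hHψ)
    rw [add_zero] at hbtend
    exact le_of_tendsto_of_tendsto' hdtend hbtend fun n =>
      E3 (ψ n) T (τ q) (τ q') (hτ0 q) hqq hqT
  -- rational approximations of real times
  have hqex : ∀ (t : ℝ) (n : ℕ), ∃ q : ℚ, t < (q : ℝ) ∧ (q : ℝ) < t + 1 / (n + 1) := by
    intro t n
    apply exists_rat_btwn
    have h1 : (0 : ℝ) < 1 / (n + 1) := by positivity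
    linarith
  choose qf hqf1 hqf2 using hqex
  have hone : ∀ n : ℕ, (1 : ℝ) / (n + 1) ≤ 1 := by
    intro n
    rw [div_le_one (by positivity)]
    linarith [Nat.cast_nonneg (α := ℝ) n]
  have hτq : ∀ (t : ℝ), 0 ≤ t → ∀ n, τ (qf t n) = (qf t n : ℝ) := by
    intro t ht n
    exact max_eq_left (le_trans ht (hqf1 t n).le)
  have hcau : ∀ t : ℝ, 0 ≤ t → CauchySeq (fun n => g (qf t n)) := by
    intro t ht
    refine cauchySeq_of_le_tendsto_0 (fun N => Q (t + 1) * Real.sqrt (2 / (N + 1))) ?_ ?_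
    · intro n j N hn hj
      have key : ∀ i j : ℕ, N ≤ i → N ≤ j → τ (qf t i) ≤ τ (qf t j) →
          dist (g (qf t i)) (g (qf t j)) ≤ Q (t + 1) * Real.sqrt (2 / (N + 1)) := by
        intro i j hi hj hij
        have h1 : τ (qf t j) ≤ t + 1 := by
          rw [hτq t ht]
          linarith [hqf2 t j, hone j]
        have h2 := hgH (qf t i) (qf t j) (t + 1) hij h1
        have h3 : τ (qf t j) - τ (qf t i) ≤ 2 / (N + 1) := by
          rw [hτq t ht, hτq t ht]
          have h6 : 1 / ((j : ℝ) + 1) ≤ 1 / ((N : ℝ) + 1) := by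
            apply one_div_le_one_div_of_le (by positivity)
            have : (N : ℝ) ≤ (j : ℝ) := by exact_mod_cast hj
            linarith
          have h7 : (0 : ℝ) ≤ 1 / ((N : ℝ) + 1) := by positivity
          have h8 : (2 : ℝ) / ((N : ℝ) + 1) = 1 / ((N : ℝ) + 1) + 1 / ((N : ℝ) + 1) := by
            ring
          have h9 := hqf1 t i
          have h10 := hqf2 t j
          rw [h8]
          linarith
        calc dist (g (qf t i)) (g (qf t j))
            ≤ Q (t + 1) * Real.sqrt (τ (qf t j) - τ (qf t i)) := h2
          _ ≤ Q (t + 1) * Real.sqrt (2 / (N + 1)) :=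
              mul_le_mul_of_nonneg_left (Real.sqrt_le_sqrt h3) (hQ0 _)
      rcases le_total (τ (qf t n)) (τ (qf t j)) with hle | hle
      · exact key n j hn hj hle
      · rw [dist_comm]; exact key j n hj hn hle
    · have he : (fun N : ℕ => (2 : ℝ) / (N + 1)) = fun N : ℕ => 2 * (1 / ((N : ℝ) + 1)) := by
        funext N; ring
      have h1 : Tendsto (fun N : ℕ => (2 : ℝ) / (N + 1)) atTop (nhds 0) := by
        rw [he]
        have h0 := tendsto_one_div_add_atTop_nhds_zero_nat.const_mul (2 : ℝ)
        rwa [mul_zero] at h0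
      have h2 : Tendsto (fun N : ℕ => Real.sqrt (2 / (N + 1))) atTop
          (nhds (Real.sqrt 0)) := (Real.continuous_sqrt.tendsto _).comp h1
      rw [Real.sqrt_zero] at h2
      have h3 := h2.const_mul (Q (t + 1))
      rwa [mul_zero] at h3
  have hulim : ∀ t : ℝ, ∃ x : X, 0 ≤ t → Tendsto (fun n => g (qf t n)) atTop (nhds x) := by
    intro t
    by_cases ht : 0 ≤ t
    · obtain ⟨x, hx⟩ := cauchySeq_tendsto_of_complete (hcau t ht)
      exact ⟨x, fun _ => hx⟩
    · exact ⟨u₀, fun hc => absurd hc ht⟩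
  choose u hu using hulim
  -- the key convergence at every nonnegative time
  have KCt : ∀ t : ℝ, 0 ≤ t → Tendsto (fun n => W (ψ n) t) atTop (nhds (u t)) := by
    intro t ht
    rw [Metric.tendsto_atTop]
    intro ε hε
    set T : ℝ := t + 1 with hTdef
    have hev1 : Tendsto (fun j : ℕ => Q T * Real.sqrt (1 / (j + 1))) atTop (nhds 0) := by
      have h1 : Tendsto (fun j : ℕ => Real.sqrt (1 / (j + 1))) atTop (nhds (Real.sqrt 0)) :=
        (Real.continuous_sqrt.tendsto _).comp tendsto_one_div_add_atTop_nhds_zero_nat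
      rw [Real.sqrt_zero] at h1
      have h2 := h1.const_mul (Q T)
      rwa [mul_zero] at h2
    have hev2 : Tendsto (fun j => dist (g (qf t j)) (u t)) atTop (nhds 0) :=
      tendsto_iff_dist_tendsto_zero.mp (hu t ht)
    have hev3 : ∀ᶠ j : ℕ in atTop, Q T * Real.sqrt (1 / ((j : ℝ) + 1)) < ε / 6 :=
      hev1.eventually (eventually_lt_nhds (by linarith))
    have hev4 : ∀ᶠ j in atTop, dist (g (qf t j)) (u t) < ε / 3 :=
      hev2.eventually (eventually_lt_nhds (by linarith))
    obtain ⟨j, hj3, hj4⟩ := (hev3.and hev4).exists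
    have hq1 : t ≤ τ (qf t j) := by rw [hτq t ht]; exact (hqf1 t j).le
    have hq2 : τ (qf t j) ≤ T := by
      rw [hτq t ht, hTdef]
      linarith [hqf2 t j, hone j]
    have hδ : τ (qf t j) - t ≤ 1 / (j + 1) := by
      rw [hτq t ht]
      linarith [hqf2 t j]
    have hb1 : Tendsto (fun n => Q T * Real.sqrt (τ (qf t j) - t + H (ψ n))) atTop
        (nhds (Q T * Real.sqrt (τ (qf t j) - t + 0))) := by
      apply Tendsto.const_mul
      exact (Real.continuous_sqrt.tendsto _).comp (tendsto_const_nhds.add hHψ)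
    have hlim_lt : Q T * Real.sqrt (τ (qf t j) - t + 0) < ε / 3 := by
      rw [add_zero]
      calc Q T * Real.sqrt (τ (qf t j) - t) ≤ Q T * Real.sqrt (1 / (j + 1)) :=
            mul_le_mul_of_nonneg_left (Real.sqrt_le_sqrt hδ) (hQ0 _)
        _ < ε / 6 := hj3
        _ < ε / 3 := by linarith
    have hev5 : ∀ᶠ n in atTop, Q T * Real.sqrt (τ (qf t j) - t + H (ψ n)) < ε / 3 :=
      hb1.eventually (eventually_lt_nhds hlim_lt)
    have hev6 : ∀ᶠ n in atTop, dist (W (ψ n) (τ (qf t j))) (g (qf t j)) < ε / 3 := by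
      have h1 := tendsto_iff_dist_tendsto_zero.mp (hgq (qf t j))
      exact h1.eventually (eventually_lt_nhds (by linarith))
    obtain ⟨N, hN⟩ := eventually_atTop.mp (hev5.and hev6)
    refine ⟨N, fun n hn => ?_⟩
    obtain ⟨h5, h6⟩ := hN n hn
    have htri4 : dist (W (ψ n) t) (u t) ≤ dist (W (ψ n) t) (W (ψ n) (τ (qf t j)))
        + dist (W (ψ n) (τ (qf t j))) (g (qf t j)) + dist (g (qf t j)) (u t) :=
      dist_triangle4 _ _ _ _
    have hE3 := E3 (ψ n) T t (τ (qf t j)) ht hq1 hq2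
    linarith
  -- Hölder continuity of the limit curve
  have hureal : ∀ s t : ℝ, 0 ≤ s → s ≤ t → dist (u s) (u t) ≤ Q t * Real.sqrt (t - s) := by
    intro s t hss hst
    have ht : 0 ≤ t := le_trans hss hst
    have hdt : Tendsto (fun n => dist (W (ψ n) s) (W (ψ n) t)) atTop
        (nhds (dist (u s) (u t))) := (KCt s hss).dist (KCt t ht)
    have hbt : Tendsto (fun n => Q t * Real.sqrt (t - s + H (ψ n))) atTop
        (nhds (Q t * Real.sqrt (t - s + 0))) := by
      apply Tendsto.const_mul
      exact (Real.continuous_sqrt.tendsto _).comp (tendsto_const_nhds.add hHψ)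
    rw [add_zero] at hbt
    exact le_of_tendsto_of_tendsto' hdt hbt fun n => E3 (ψ n) t s t hss hst le_rfl
  have hucont : ContinuousOn u (Set.Ici 0) := by
    intro t₀ ht₀
    have ht₀' : (0 : ℝ) ≤ t₀ := ht₀
    rw [Metric.continuousWithinAt_iff]
    intro ε hε
    set Qm : ℝ := Q (t₀ + 1) + 1 with hQmdef
    have hQm0 : 0 < Qm := by
      have := hQ0 (t₀ + 1)
      rw [hQmdef]; linarith
    refine ⟨min 1 ((ε / Qm) ^ 2), lt_min one_pos (pow_pos (div_pos hε hQm0) 2), ?_⟩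
    intro t hts hdistt
    have hd1 : |t - t₀| < min 1 ((ε / Qm) ^ 2) := by rwa [Real.dist_eq] at hdistt
    have hd2 : |t - t₀| < 1 := lt_of_lt_of_le hd1 (min_le_left _ _)
    have hd3 : |t - t₀| < (ε / Qm) ^ 2 := lt_of_lt_of_le hd1 (min_le_right _ _)
    have ht0 : (0 : ℝ) ≤ t := hts
    have habs1 : t - t₀ ≤ |t - t₀| := le_abs_self _
    have habs2 : t₀ - t ≤ |t - t₀| := by rw [abs_sub_comm]; exact le_abs_self _
    rcases le_total t t₀ with hle | hle
    · have h1 := hureal t t₀ ht0 hle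
      have h2 : Q t₀ ≤ Qm := by
        rw [hQmdef]
        linarith [hQmono t₀ (t₀ + 1) ht₀' (by linarith)]
      have h3 : t₀ - t < (ε / Qm) ^ 2 := lt_of_le_of_lt habs2 hd3
      have h4 : Real.sqrt (t₀ - t) < ε / Qm := by
        have h5 := Real.sqrt_lt_sqrt (by linarith) h3
        rwa [Real.sqrt_sq (div_nonneg hε.le hQm0.le)] at h5
      calc dist (u t) (u t₀) ≤ Q t₀ * Real.sqrt (t₀ - t) := h1
        _ ≤ Qm * Real.sqrt (t₀ - t) := mul_le_mul_of_nonneg_right h2 (Real.sqrt_nonneg _)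
        _ < Qm * (ε / Qm) := mul_lt_mul_of_pos_left h4 hQm0
        _ = ε := by rw [mul_comm, div_mul_cancel₀ _ (ne_of_gt hQm0)]
    · have h1 := hureal t₀ t ht₀' hle
      have h2 : Q t ≤ Qm := by
        rw [hQmdef]
        linarith [hQmono t (t₀ + 1) ht0 (by linarith)]
      have h3 : t - t₀ < (ε / Qm) ^ 2 := lt_of_le_of_lt habs1 hd3
      have h4 : Real.sqrt (t - t₀) < ε / Qm := by
        have h5 := Real.sqrt_lt_sqrt (by linarith) h3
        rwa [Real.sqrt_sq (div_nonneg hε.le hQm0.le)] at h5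
      calc dist (u t) (u t₀) = dist (u t₀) (u t) := dist_comm _ _
        _ ≤ Q t * Real.sqrt (t - t₀) := h1
        _ ≤ Qm * Real.sqrt (t - t₀) := mul_le_mul_of_nonneg_right h2 (Real.sqrt_nonneg _)
        _ < Qm * (ε / Qm) := mul_lt_mul_of_pos_left h4 hQm0
        _ = ε := by rw [mul_comm, div_mul_cancel₀ _ (ne_of_gt hQm0)]
  have hu00 : u 0 = u₀ := by
    have h1 : Tendsto (fun n => W (ψ n) 0) atTop (nhds (u 0)) := KCt 0 le_rfl
    have h2 : (fun n => W (ψ n) 0) = fun _ => u₀ := by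
      funext n
      show w (ψ n) (Nat.floor ((0 : ℝ) / H (ψ n))) = u₀
      rw [zero_div, Nat.floor_zero]
      exact hw0 (ψ n)
    rw [h2] at h1
    exact tendsto_nhds_unique h1 tendsto_const_nhds
  refine ⟨fun n => H (ψ n), fun n => w (ψ n), u, fun n => hHpos (ψ n), hHψ,
    fun n => hw0 (ψ n), fun n k y => hwmin (ψ n) k y, hucont, hu00, ?_⟩
  intro t ht
  exact tendsto_iff_dist_tendsto_zero.mp (KCt t ht)
end
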